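/- Let p ≥ 0 and q ≥ 1 be integers and n = p+q+2. For every row vector u ∈ ℂ^p, every row vector v ∈ ℂ^q and every w ∈ ℂ with conj(w) = -w, the matrix exponential of N_{u,v,w} is exp(N_{u,v,w}) = I + N_{u,v,w} + (1/2) N_{u,v,w}^2, where I is the n×n identity matrix. -/

import Mathlib

/-- The matrix `N_{u,v,w}` over `ℂ`, written in block form with row/column blocks of
sizes `1, p, q, 1` (the index type `Fin 1 ⊕ Fin p ⊕ Fin q ⊕ Fin 1` has `p + q + 2` elements):
`N = [[-w, u, v, w], [-u*, 0, 0, u*], [v*, 0, 0, -v*], [-w, u, v, w]]`. -/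
def Nmat {p q : ℕ} (u : Fin p → ℂ) (v : Fin q → ℂ) (w : ℂ) :
    Matrix (Fin 1 ⊕ Fin p ⊕ Fin q ⊕ Fin 1) (Fin 1 ⊕ Fin p ⊕ Fin q ⊕ Fin 1) ℂ :=
  fun i j =>
    match i, j with
    | Sum.inl _, Sum.inl _ => -w
    | Sum.inl _, Sum.inr (Sum.inl j) => u j
    | Sum.inl _, Sum.inr (Sum.inr (Sum.inl j)) => v j
    | Sum.inl _, Sum.inr (Sum.inr (Sum.inr _)) => w
    | Sum.inr (Sum.inl i), Sum.inl _ => -(starRingEnd ℂ) (u i)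
    | Sum.inr (Sum.inl i), Sum.inr (Sum.inr (Sum.inr _)) => (starRingEnd ℂ) (u i)
    | Sum.inr (Sum.inl _), _ => 0
    | Sum.inr (Sum.inr (Sum.inl i)), Sum.inl _ => (starRingEnd ℂ) (v i)
    | Sum.inr (Sum.inr (Sum.inl i)), Sum.inr (Sum.inr (Sum.inr _)) => -(starRingEnd ℂ) (v i)
    | Sum.inr (Sum.inr (Sum.inl _)), _ => 0
    | Sum.inr (Sum.inr (Sum.inr _)), Sum.inl _ => -w
    | Sum.inr (Sum.inr (Sum.inr _)), Sum.inr (Sum.inl j) => u j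
    | Sum.inr (Sum.inr (Sum.inr _)), Sum.inr (Sum.inr (Sum.inl j)) => v j
    | Sum.inr (Sum.inr (Sum.inr _)), Sum.inr (Sum.inr (Sum.inr _)) => w

noncomputable def N2mat {p q : ℕ} (u : Fin p → ℂ) (v : Fin q → ℂ) :
    Matrix (Fin 1 ⊕ Fin p ⊕ Fin q ⊕ Fin 1) (Fin 1 ⊕ Fin p ⊕ Fin q ⊕ Fin 1) ℂ :=
  fun i j =>
    match i, j with
    | Sum.inl _, Sum.inl _ =>
        -((∑ k, u k * (starRingEnd ℂ) (u k)) - ∑ k, v k * (starRingEnd ℂ) (v k))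
    | Sum.inl _, Sum.inr (Sum.inr (Sum.inr _)) =>
        (∑ k, u k * (starRingEnd ℂ) (u k)) - ∑ k, v k * (starRingEnd ℂ) (v k)
    | Sum.inr (Sum.inr (Sum.inr _)), Sum.inl _ =>
        -((∑ k, u k * (starRingEnd ℂ) (u k)) - ∑ k, v k * (starRingEnd ℂ) (v k))
    | Sum.inr (Sum.inr (Sum.inr _)), Sum.inr (Sum.inr (Sum.inr _)) =>
        (∑ k, u k * (starRingEnd ℂ) (u k)) - ∑ k, v k * (starRingEnd ℂ) (v k)
    | _, _ => 0

set_option maxHeartbeats 1000000 in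
lemma Nmat_sq {p q : ℕ} (u : Fin p → ℂ) (v : Fin q → ℂ) (w : ℂ) :
    Nmat u v w ^ 2 = N2mat u v := by
  rw [sq]
  ext i j
  rcases i with i | i | i | i <;> rcases j with j | j | j | j <;>
    simp only [Matrix.mul_apply, Fintype.sum_sum_type, Fin.sum_univ_one, Nmat, N2mat,
      mul_neg, neg_mul, mul_zero, zero_mul, Finset.sum_neg_distrib, Finset.sum_const_zero,
      neg_neg] <;> ring

set_option maxHeartbeats 1000000 in
lemma Nmat_cube {p q : ℕ} (u : Fin p → ℂ) (v : Fin q → ℂ) (w : ℂ) :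
    Nmat u v w ^ 3 = 0 := by
  have h3 : (3 : ℕ) = 2 + 1 := rfl
  rw [h3, pow_succ, Nmat_sq]
  ext i j
  rcases i with i | i | i | i <;> rcases j with j | j | j | j <;>
    simp only [Matrix.mul_apply, Fintype.sum_sum_type, Fin.sum_univ_one, Nmat, N2mat,
      Matrix.zero_apply, mul_neg, neg_mul, mul_zero, zero_mul, Finset.sum_const_zero,
      neg_neg]
  all_goals try ring
  all_goals simp

/-- For every row vector `u ∈ ℂ^p`, row vector `v ∈ ℂ^q` and `w ∈ ℂ` with `conj w = -w`,
the matrix exponential of `N_{u,v,w}` equals `I + N + (1/2) N²`. -/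
theorem exp_Nmat (p q : ℕ) (hp : 0 ≤ p) (hq : 1 ≤ q)
    (u : Fin p → ℂ) (v : Fin q → ℂ) (w : ℂ) (hw : starRingEnd ℂ w = -w) :
    NormedSpace.exp (Nmat u v w) = 1 + Nmat u v w + (1 / 2 : ℂ) • Nmat u v w ^ 2 := by
  rw [NormedSpace.exp_eq_tsum ℂ]
  dsimp only
  rw [tsum_eq_sum (s := Finset.range 3) (f := fun n : ℕ => ((n.factorial : ℂ))⁻¹ • Nmat u v w ^ n)
    (fun n hn => by
      have h3 : 3 ≤ n := by simpa using hn
      obtain ⟨m, rfl⟩ := Nat.exists_eq_add_of_le h3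
      rw [pow_add, Nmat_cube, zero_mul, smul_zero])]
  rw [Finset.sum_range_succ, Finset.sum_range_succ, Finset.sum_range_one]
  norm_num
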